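/- In the algebra c₀₀ of finitely supported real sequences with the clone 𝒜̄ generated by addition, pointwise multiplication, and real scalar multiplications, no non-empty subset B ⊆ c₀₀ is 𝒜̄-free. In particular, for every b ∈ c₀₀ there is a non-zero polynomial p(x) = Σ_{i=0}^{n} λ_i x^{i+1} with p(b) = 0, while p is not identically zero on c₀₀. -/

import Mathlib

/-- A finitary algebraic operation on `A`: a function `A^{S} → A` where the
support `S` is a finite subset of `ω`. -/
structure Op (A : Type*) where
  supp : Finset ℕ
  op : (supp → A) → A

/-- The `𝒜`-hull of a set `B ⊆ A`: `B` together with all values of operations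
of `𝒜` on tuples from `B`. -/
def hull {A : Type*} (𝒜 : Set (Op A)) (B : Set A) : Set A :=
  B ∪ ⋃ α ∈ 𝒜, {a | ∃ x : α.supp → A, (∀ i, x i ∈ B) ∧ α.op x = a}

/-- `B` is `𝒜`-independent: `b ∉ 𝒜(B \ {b})` for all `b ∈ B`. -/
def IsIndep {A : Type*} (𝒜 : Set (Op A)) (B : Set A) : Prop :=
  ∀ b ∈ B, b ∉ hull 𝒜 (B \ {b})

/-- `B` is strongly `𝒜`-independent. -/
def IsStronglyIndep {A : Type*} (𝒜 : Set (Op A)) (B : Set A) : Prop :=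
  B ∩ hull 𝒜 ∅ = ∅ ∧
  ∀ B₁ B₂ : Set A, B₁ ⊆ B → B₂ ⊆ B → hull 𝒜 B₁ ∩ hull 𝒜 B₂ = hull 𝒜 (B₁ ∩ B₂)

/-- `B` is `𝒜`-free: every function `f : B → A` (encoded as a function on `A`
whose values off `B` are irrelevant) admits `f̄ : 𝒜(B) → A` (encoded likewise)
with `f̄(α(x)) = α(f ∘ x)` for all `α ∈ 𝒜` and `x ∈ B^{S_α}`. -/
def IsFree {A : Type*} (𝒜 : Set (Op A)) (B : Set A) : Prop :=
  ∀ f : A → A, ∃ g : A → A, ∀ α ∈ 𝒜, ∀ x : α.supp → A,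
    (∀ i, x i ∈ B) → g (α.op x) = α.op (fun i => f (x i))

/-- `𝒜` is unital: it contains the identity operation `A^1 → A`. -/
def Unital {A : Type*} (𝒜 : Set (Op A)) : Prop :=
  ∃ α ∈ 𝒜, ∃ h : α.supp = {0},
    ∀ x : α.supp → A, α.op x = x ⟨0, by simp [h]⟩

/-- `𝒜` is stable under substitutions. -/
def SubstStable {A : Type*} (𝒜 : Set (Op A)) : Prop :=
  ∀ α ∈ 𝒜, ∀ (E : Finset ℕ) (σ : α.supp → E),
    (⟨E, fun x => α.op (fun i => x (σ i))⟩ : Op A) ∈ 𝒜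

/-- `𝒜` is `∅`-regular. -/
def EmptyRegular {A : Type*} (𝒜 : Set (Op A)) : Prop :=
  ∀ α ∈ 𝒜, (∀ x y : α.supp → A, α.op x = α.op y) →
    ∃ β ∈ 𝒜, β.supp = ∅ ∧ ∀ (z : β.supp → A) (x : α.supp → A), β.op z = α.op x

/-- `𝒜` is stable under compositions. -/
def CompStable {A : Type*} (𝒜 : Set (Op A)) : Prop :=
  ∀ α ∈ 𝒜, ∀ (S : Finset ℕ) (β : α.supp → Op A),
    (∀ i, β i ∈ 𝒜) → ∀ hS : ∀ i, (β i).supp = S,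
    (⟨S, fun x => α.op (fun i => (β i).op (fun j => x ⟨j.1, hS i ▸ j.2⟩))⟩ : Op A) ∈ 𝒜

/-- A clone is a unital, `∅`-regular, substitution- and composition-stable
family of operations. -/
def IsClone {A : Type*} (𝒜 : Set (Op A)) : Prop :=
  Unital 𝒜 ∧ EmptyRegular 𝒜 ∧ SubstStable 𝒜 ∧ CompStable 𝒜

/-- `c₀₀`: finitely supported real sequences. -/
abbrev C00 := {x : ℕ → ℝ // (Function.support x).Finite}

/-- Pointwise addition as an operation on `c₀₀` with support `{0, 1}`. -/
def addOp : Op C00 :=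
  ⟨{0, 1}, fun x =>
    ⟨fun n => (x ⟨0, by simp⟩).1 n + (x ⟨1, by simp⟩).1 n,
      ((x ⟨0, by simp⟩).2.union (x ⟨1, by simp⟩).2).subset
        (Function.support_add _ _)⟩⟩

/-- Pointwise multiplication as an operation on `c₀₀` with support `{0, 1}`. -/
def mulOp : Op C00 :=
  ⟨{0, 1}, fun x =>
    ⟨fun n => (x ⟨0, by simp⟩).1 n * (x ⟨1, by simp⟩).1 n,
      (x ⟨0, by simp⟩).2.subset fun n hn => by
        simp only [Function.mem_support] at hn ⊢
        exact fun h => hn (by rw [h, zero_mul])⟩⟩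

/-- Scalar multiplication by `t` as a unary operation on `c₀₀`. -/
def smulOp (t : ℝ) : Op C00 :=
  ⟨{0}, fun x =>
    ⟨fun n => t * (x ⟨0, by simp⟩).1 n,
      (x ⟨0, by simp⟩).2.subset fun n hn => by
        simp only [Function.mem_support] at hn ⊢
        exact fun h => hn (by rw [h, mul_zero])⟩⟩

/-- The operation family `𝒜 = {+, ·} ∪ {αₜ : t ∈ ℝ}` on `c₀₀`. -/
def c00Ops : Set (Op C00) := {addOp, mulOp} ∪ Set.range smulOp

/-- The zero element of `c₀₀`. -/
def czero : C00 := ⟨fun _ => 0, by simp⟩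

/-- The value of the polynomial `p(x) = Σ_{i=0}^{n} λ_i x^{i+1}` (with zero
constant term, applied pointwise) at an element of `c₀₀`. -/
def ppoly (n : ℕ) (lam : Fin (n + 1) → ℝ) (b : C00) : C00 :=
  ⟨fun m => ∑ i : Fin (n + 1), lam i * (b.1 m) ^ (i.1 + 1),
    b.2.subset fun m hm => by
      simp only [Function.mem_support] at hm ⊢
      intro h
      exact hm (Finset.sum_eq_zero fun i _ => by simp [h])⟩

-- AUX START
section Aux

/-- Pointwise addition on `c₀₀`. -/
def cadd (a b : C00) : C00 :=
  ⟨fun n => a.1 n + b.1 n, (a.2.union b.2).subset (Function.support_add _ _)⟩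

/-- Pointwise multiplication on `c₀₀`. -/
def cmul (a b : C00) : C00 :=
  ⟨fun n => a.1 n * b.1 n, a.2.subset fun n hn => by
    simp only [Function.mem_support] at hn ⊢
    exact fun h => hn (by rw [h, zero_mul])⟩

/-- Scalar multiplication on `c₀₀`. -/
def csmul (t : ℝ) (a : C00) : C00 :=
  ⟨fun n => t * a.1 n, a.2.subset fun n hn => by
    simp only [Function.mem_support] at hn ⊢
    exact fun h => hn (by rw [h, mul_zero])⟩

/-- Pointwise power on `c₀₀`. -/
def cpow (a : C00) (k : ℕ) : C00 :=
  ⟨fun n => a.1 n ^ (k + 1), a.2.subset fun n hn => by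
    simp only [Function.mem_support] at hn ⊢
    exact fun h => hn (by rw [h, zero_pow (Nat.succ_ne_zero k)])⟩

/-- The unary operation associated to a function `p : C00 → C00`. -/
def unOp (p : C00 → C00) : Op C00 :=
  ⟨{0}, fun x => p (x ⟨0, by simp⟩)⟩

variable {𝒜' : Set (Op C00)}

lemma unOp_id_mem (hclone : IsClone 𝒜') : unOp (fun a => a) ∈ 𝒜' := by
  obtain ⟨α, hα, h, hop⟩ := hclone.1
  have : α = unOp (fun a => a) := by
    obtain ⟨s, o⟩ := α
    dsimp at h
    subst h
    simp only [unOp, Op.mk.injEq, heq_eq_eq, true_and]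
    funext x
    exact hop x
  rwa [this] at hα

lemma unOp_smul_mem (hclone : IsClone 𝒜') (hsub : c00Ops ⊆ 𝒜') (t : ℝ) {p : C00 → C00} (hp : unOp p ∈ 𝒜') :
    unOp (fun a => csmul t (p a)) ∈ 𝒜' := by
  have hmem : smulOp t ∈ 𝒜' := hsub (Or.inr ⟨t, rfl⟩)
  have hc := hclone.2.2.2 (smulOp t) hmem ({0} : Finset ℕ)
    (fun _ => unOp p) (fun _ => hp) (fun _ => rfl)
  refine Set.mem_of_eq_of_mem ?_ hc
  simp only [unOp, Op.mk.injEq, heq_eq_eq, true_and]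
  funext x
  rfl

lemma unOp_add_mem (hclone : IsClone 𝒜') (hsub : c00Ops ⊆ 𝒜') {p q : C00 → C00} (hp : unOp p ∈ 𝒜') (hq : unOp q ∈ 𝒜') :
    unOp (fun a => cadd (p a) (q a)) ∈ 𝒜' := by
  have hmem : addOp ∈ 𝒜' := hsub (Or.inl (Or.inl rfl))
  have hc := hclone.2.2.2 addOp hmem ({0} : Finset ℕ)
    (fun i => if i.1 = 0 then unOp p else unOp q)
    (fun i => by split <;> assumption)
    (fun i => by split <;> rfl)
  refine Set.mem_of_eq_of_mem ?_ hc
  simp only [unOp, Op.mk.injEq, heq_eq_eq, true_and]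
  funext x
  show _ = addOp.op _
  simp only [addOp]
  apply Subtype.ext
  funext m
  norm_num
  rfl

lemma unOp_mul_mem (hclone : IsClone 𝒜') (hsub : c00Ops ⊆ 𝒜') {p q : C00 → C00} (hp : unOp p ∈ 𝒜') (hq : unOp q ∈ 𝒜') :
    unOp (fun a => cmul (p a) (q a)) ∈ 𝒜' := by
  have hmem : mulOp ∈ 𝒜' := hsub (Or.inl (Or.inr rfl))
  have hc := hclone.2.2.2 mulOp hmem ({0} : Finset ℕ)
    (fun i => if i.1 = 0 then unOp p else unOp q)
    (fun i => by split <;> assumption)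
    (fun i => by split <;> rfl)
  refine Set.mem_of_eq_of_mem ?_ hc
  simp only [unOp, Op.mk.injEq, heq_eq_eq, true_and]
  funext x
  show _ = mulOp.op _
  simp only [mulOp]
  apply Subtype.ext
  funext m
  norm_num
  rfl

lemma unOp_pow_mem (hclone : IsClone 𝒜') (hsub : c00Ops ⊆ 𝒜') (k : ℕ) : unOp (fun a => cpow a k) ∈ 𝒜' := by
  induction k with
  | zero =>
      have : unOp (fun a : C00 => a) = unOp (fun a => cpow a 0) := by
        simp only [unOp, Op.mk.injEq, heq_eq_eq, true_and]
        funext x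
        apply Subtype.ext
        funext m
        simp [cpow]
      rw [← this]
      exact unOp_id_mem hclone
  | succ k ih =>
      have h := unOp_mul_mem hclone hsub ih (unOp_id_mem hclone)
      have : unOp (fun a => cmul (cpow a k) a) = unOp (fun a => cpow a (k + 1)) := by
        simp only [unOp, Op.mk.injEq, heq_eq_eq, true_and]
        funext x
        apply Subtype.ext
        funext m
        simp [cpow, cmul, pow_succ]
      rwa [this] at h

lemma unOp_ppoly_mem (hclone : IsClone 𝒜') (hsub : c00Ops ⊆ 𝒜') (n : ℕ) (lam : Fin (n + 1) → ℝ) :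
    unOp (ppoly n lam) ∈ 𝒜' := by
  induction n with
  | zero =>
      have h := unOp_smul_mem hclone hsub (lam 0) (unOp_pow_mem hclone hsub 0)
      have : unOp (fun a => csmul (lam 0) (cpow a 0)) = unOp (ppoly 0 lam) := by
        simp only [unOp, Op.mk.injEq, heq_eq_eq, true_and]
        funext x
        apply Subtype.ext
        funext m
        simp [csmul, cpow, ppoly]
      rwa [this] at h
  | succ n ih =>
      have h := unOp_add_mem hclone hsub (ih (fun i => lam i.castSucc))
        (unOp_smul_mem hclone hsub (lam (Fin.last (n + 1)))
          (unOp_pow_mem hclone hsub (n + 1)))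
      have : unOp (fun a => cadd (ppoly n (fun i => lam i.castSucc) a)
          (csmul (lam (Fin.last (n + 1))) (cpow a (n + 1)))) = unOp (ppoly (n + 1) lam) := by
        simp only [unOp, Op.mk.injEq, heq_eq_eq, true_and]
        funext x
        apply Subtype.ext
        funext m
        simp [cadd, csmul, cpow, ppoly, Fin.sum_univ_castSucc]
      rwa [this] at h

end Aux
-- AUX END

lemma exists_poly (b : C00) : ∃ (n : ℕ) (lam : Fin (n + 1) → ℝ),
    lam ≠ 0 ∧ ppoly n lam b = czero ∧ ∃ y : C00, ppoly n lam y ≠ czero := by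
  classical
  set F := b.2.toFinset with hF
  set n := F.card with hn
  set v : Fin (n + 1) → (F → ℝ) := fun i m => b.1 m.1 ^ (i.1 + 1) with hv
  have hni : ¬ LinearIndependent ℝ v := by
    intro h
    have hcard := h.fintype_card_le_finrank
    simp only [Module.finrank_pi, Fintype.card_coe, Fintype.card_fin] at hcard
    omega
  obtain ⟨lam, hsum, i0, hi0⟩ := Fintype.not_linearIndependent_iff.1 hni
  refine ⟨n, lam, ?_, ?_, ?_⟩
  · intro h; exact hi0 (by simp [h])
  · apply Subtype.ext
    funext m
    show (∑ i : Fin (n + 1), lam i * (b.1 m) ^ (i.1 + 1)) = 0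
    by_cases hm : b.1 m = 0
    · exact Finset.sum_eq_zero fun i _ => by simp [hm]
    · have hmem : m ∈ F := b.2.mem_toFinset.2 hm
      have := congrFun hsum ⟨m, hmem⟩
      simpa [v, Finset.sum_apply, Pi.smul_apply, smul_eq_mul] using this
  · -- find t with the polynomial nonzero at t
    set P : Polynomial ℝ := ∑ i : Fin (n + 1), Polynomial.C (lam i) * Polynomial.X ^ (i.1 + 1)
      with hP
    have hcoeff : P.coeff (i0.1 + 1) = lam i0 := by
      rw [hP, Polynomial.finset_sum_coeff]
      rw [Finset.sum_eq_single i0]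
      · simp
      · intro j _ hj
        have : (i0.1 + 1 : ℕ) ≠ j.1 + 1 :=
          fun h => hj (Fin.ext (by omega))
        simp [Polynomial.coeff_X_pow, this]
        exact fun h => absurd h (by omega)
      · simp
    have hPne : P ≠ 0 := fun h => hi0 (by rw [h] at hcoeff; simpa using hcoeff.symm)
    have : ∃ t : ℝ, P.eval t ≠ 0 := by
      by_contra h
      push_neg at h
      exact hPne (Polynomial.zero_of_eval_zero P h)
    obtain ⟨t, ht⟩ := this
    have heval : P.eval t = ∑ i : Fin (n + 1), lam i * t ^ (i.1 + 1) := by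
      simp [hP, Polynomial.eval_finset_sum]
    refine ⟨⟨fun m => if m = 0 then t else 0, Set.Finite.subset (Set.finite_singleton 0)
      fun m hm => by
        simp only [Function.mem_support, ne_eq, ite_eq_right_iff, not_forall] at hm
        simp [hm.1]⟩, ?_⟩
    intro h
    have := congrFun (congrArg Subtype.val h) 0
    simp only [ppoly, czero] at this
    rw [heval] at ht
    exact ht (by simpa using this)

/-- in `c₀₀` with the clone `𝒜'` generated by addition,
pointwise multiplication and real scalar multiplications, no non-empty set is
`𝒜'`-free; in particular each `b ∈ c₀₀` is a zero of a non-zero polynomial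
`p(x) = Σ λ_i x^{i+1}` which is not identically zero on `c₀₀`. -/
theorem no_nonempty_free_subset_of_c00
    (𝒜' : Set (Op C00)) (hclone : IsClone 𝒜') (hsub : c00Ops ⊆ 𝒜')
    (hmin : ∀ 𝒞 : Set (Op C00), IsClone 𝒞 → c00Ops ⊆ 𝒞 → 𝒜' ⊆ 𝒞) :
    (∀ B : Set C00, B.Nonempty → ¬ IsFree 𝒜' B) ∧
    (∀ b : C00, ∃ (n : ℕ) (lam : Fin (n + 1) → ℝ),
      lam ≠ 0 ∧ ppoly n lam b = czero ∧ ∃ y : C00, ppoly n lam y ≠ czero) := by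
  constructor
  · rintro B ⟨b, hb⟩ hfree
    obtain ⟨n, lam, hlam, hzero, y, hy⟩ := exists_poly b
    obtain ⟨g, hg⟩ := hfree (fun _ => y)
    have h1 := hg (unOp (ppoly n lam)) (unOp_ppoly_mem hclone hsub n lam)
      (fun _ => b) (fun _ => hb)
    have h2 := hg (smulOp 0) (hsub (Or.inr ⟨0, rfl⟩)) (fun _ => b) (fun _ => hb)
    have e1 : (unOp (ppoly n lam)).op (fun _ => b) = ppoly n lam b := rfl
    have e2 : (unOp (ppoly n lam)).op (fun _ => y) = ppoly n lam y := rfl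
    have e3 : (smulOp 0).op (fun _ : ((smulOp 0).supp : Finset ℕ) => b) = czero := by
      apply Subtype.ext; funext m; simp [smulOp, czero]
    have e4 : (smulOp 0).op (fun _ : ((smulOp 0).supp : Finset ℕ) => y) = czero := by
      apply Subtype.ext; funext m; simp [smulOp, czero]
    rw [e1, hzero, e2] at h1
    rw [e3, e4] at h2
    exact hy (h1 ▸ h2)
  · exact exists_poly
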